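/- Suppose there exists a chain of permutations w = v₀, v₁, …, v_d = w₀ in Sₙ (w₀ the longest element) such that for each i there is an increasing k_i-chain from v_{i-1} to v_i, where k₁, …, k_d are distinct elements of [n-1]. Let k = min{k₁, …, k_d}. Then w(i) = n + 1 - i for all i ∈ [k-1]. -/

import Mathlib

/-- Number of inversions of a permutation of `Fin n`. -/
def invCount {n : ℕ} (w : Equiv.Perm (Fin n)) : ℕ :=
  (Finset.univ.filter (fun p : Fin n × Fin n => p.1 < p.2 ∧ w p.2 < w p.1)).card

/-- `w ∈ Sₙ^{k↘}` (1-indexed: `w(k+1) > ⋯ > w(n)`); positions are 0-indexed here. -/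
def DescFrom (n k : ℕ) (w : Equiv.Perm (Fin n)) : Prop :=
  ∀ p q : Fin n, k ≤ (p : ℕ) → p < q → w q < w p

/-- `u ⋖ₖ w` : cover in the `k`-Bruhat order (1-indexed `k`; positions 0-indexed,
so `i ≤ k < j` becomes `↑i < k ≤ ↑j`). -/
def kCover (n k : ℕ) (u w : Equiv.Perm (Fin n)) : Prop :=
  ∃ i j : Fin n, (i : ℕ) < k ∧ k ≤ (j : ℕ) ∧ u = w * Equiv.swap i j ∧
    invCount w = invCount u + 1

/-- An increasing `k`-chain `v 0 ⋖ₖ v 1 ⋖ₖ ⋯ ⋖ₖ v d`, with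
`v m = v (m+1) * swap (a m) (b m)` and strictly increasing smaller swapped values
`v m (a m)`. -/
def IsIncKChain (n k : ℕ) {d : ℕ} (v : Fin (d + 1) → Equiv.Perm (Fin n))
    (a b : Fin d → Fin n) : Prop :=
  (∀ m : Fin d, (a m : ℕ) < k ∧ k ≤ (b m : ℕ) ∧
      v m.castSucc = v m.succ * Equiv.swap (a m) (b m) ∧
      invCount (v m.succ) = invCount (v m.castSucc) + 1) ∧
  ∀ m m' : Fin d, m < m' → v m.castSucc (a m) < v m'.castSucc (a m')

/-- There is an increasing `k`-chain of length `d` (number of covers) from `u` to `w`. -/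
def ExIncKChainLen (n k d : ℕ) (u w : Equiv.Perm (Fin n)) : Prop :=
  ∃ (v : Fin (d + 1) → Equiv.Perm (Fin n)) (a b : Fin d → Fin n),
    IsIncKChain n k v a b ∧ v 0 = u ∧ v (Fin.last d) = w

section Aux

open Finset Equiv

section Star
variable {n : ℕ} (u : Equiv.Perm (Fin n)) {a b : Fin n}

private def Ainv (u : Equiv.Perm (Fin n)) : Finset (Fin n × Fin n) :=
  univ.filter fun p : Fin n × Fin n => p.1 < p.2 ∧ u p.2 < u p.1

private def Binv (u : Equiv.Perm (Fin n)) (a b : Fin n) : Finset (Fin n × Fin n) :=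
  univ.filter fun p : Fin n × Fin n =>
    Equiv.swap a b p.1 < Equiv.swap a b p.2 ∧ u p.2 < u p.1

lemma invCount_mul_swap :
    invCount (u * Equiv.swap a b) = (Binv u a b).card := by
  unfold invCount Binv
  apply Finset.card_bij'
    (i := fun p _ => (Equiv.swap a b p.1, Equiv.swap a b p.2))
    (j := fun p _ => (Equiv.swap a b p.1, Equiv.swap a b p.2))
  · intro p hp
    simp only [mem_filter, mem_univ, true_and] at hp ⊢; simp only [Equiv.Perm.mul_apply] at hp ⊢
    simpa [Equiv.swap_apply_self] using hp
  · intro p hp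
    simp only [mem_filter, mem_univ, true_and] at hp ⊢; simp only [Equiv.Perm.mul_apply] at hp ⊢
    simpa [Equiv.swap_apply_self] using hp
  · intro p hp; simp [Equiv.swap_apply_self]
  · intro p hp; simp [Equiv.swap_apply_self]

lemma sdiff_AB (hab : a < b) :
    Ainv u \ Binv u a b =
      ((univ.filter fun q : Fin n => a < q ∧ q ≤ b ∧ u q < u a).image fun q => (a, q)) ∪
      ((univ.filter fun c : Fin n => a < c ∧ c < b ∧ u b < u c).image fun c => (c, b)) := by
  have hne : a ≠ b := ne_of_lt hab
  ext ⟨p, q⟩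
  simp only [Ainv, Binv, mem_sdiff, mem_filter, mem_univ, true_and, not_and, mem_union,
    mem_image, Prod.mk.injEq]
  constructor
  · rintro ⟨⟨hpq, huqp⟩, hB⟩
    have hpqne : p ≠ q := ne_of_lt hpq
    have hσ : Equiv.swap a b q < Equiv.swap a b p := by
      rcases lt_trichotomy (Equiv.swap a b p) (Equiv.swap a b q) with h | h | h
      · exact absurd huqp (by simpa using hB h)
      · exact absurd ((Equiv.swap a b).injective h) hpqne
      · exact h
    by_cases hpa : p = a
    · subst hpa
      left
      refine ⟨q, ⟨hpq, ?_, huqp⟩, rfl, rfl⟩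
      by_contra hqb
      push_neg at hqb
      have hq : Equiv.swap p b q = q :=
        Equiv.swap_apply_of_ne_of_ne (ne_of_gt hpq) (ne_of_gt hqb)
      rw [hq, Equiv.swap_apply_left] at hσ
      exact absurd (lt_trans hqb hσ) (lt_irrefl _)
    · right
      have hqb : q = b := by
        by_contra hqb
        by_cases hqa : q = a
        · subst hqa
          have hpb : p ≠ b := ne_of_lt (lt_trans hpq hab)
          rw [Equiv.swap_apply_of_ne_of_ne hpa hpb, Equiv.swap_apply_left] at hσ
          exact absurd (lt_trans (lt_trans hσ hpq) hab) (lt_irrefl _)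
        · by_cases hpb : p = b
          · subst hpb
            rw [Equiv.swap_apply_of_ne_of_ne hqa hqb, Equiv.swap_apply_right] at hσ
            exact absurd (lt_trans (lt_trans hab hpq) hσ) (lt_irrefl _)
          · rw [Equiv.swap_apply_of_ne_of_ne hpa hpb,
              Equiv.swap_apply_of_ne_of_ne hqa hqb] at hσ
            exact absurd hpq (not_lt.mpr (le_of_lt hσ))
      subst hqb
      refine ⟨p, ⟨?_, hpq, huqp⟩, rfl, rfl⟩
      have hpb : p ≠ q := ne_of_lt hpq
      rw [Equiv.swap_apply_of_ne_of_ne hpa hpb, Equiv.swap_apply_right] at hσ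
      exact hσ
  · rintro (⟨x, ⟨hax, hxb, hux⟩, hp, hq⟩ | ⟨x, ⟨hax, hxb, hux⟩, hp, hq⟩) <;> subst hp <;> subst hq
    · refine ⟨⟨hax, hux⟩, fun hσ _ => ?_⟩
      rw [Equiv.swap_apply_left] at hσ
      rcases eq_or_lt_of_le hxb with hxb' | hxb'
      · subst hxb'; rw [Equiv.swap_apply_right] at hσ; exact absurd (lt_trans hab hσ) (lt_irrefl _)
      · rw [Equiv.swap_apply_of_ne_of_ne (ne_of_gt hax) (ne_of_lt hxb')] at hσ
        exact absurd (lt_trans hxb' hσ) (lt_irrefl _)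
    · refine ⟨⟨hxb, hux⟩, fun hσ _ => ?_⟩
      rw [Equiv.swap_apply_right, Equiv.swap_apply_of_ne_of_ne (ne_of_gt hax) (ne_of_lt hxb)] at hσ
      exact absurd (lt_trans hax hσ) (lt_irrefl _)


lemma sdiff_BA (hab : a < b) :
    Binv u a b \ Ainv u =
      ((univ.filter fun s : Fin n => a ≤ s ∧ s < b ∧ u s < u b).image fun s => (b, s)) ∪
      ((univ.filter fun c : Fin n => a < c ∧ c < b ∧ u a < u c).image fun c => (c, a)) := by
  have hne : a ≠ b := ne_of_lt hab
  ext ⟨p, q⟩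
  simp only [Ainv, Binv, mem_sdiff, mem_filter, mem_univ, true_and, not_and, mem_union,
    mem_image, Prod.mk.injEq]
  constructor
  · rintro ⟨⟨hσ, huqp⟩, hA⟩
    have hqp : q < p := by
      rcases lt_trichotomy p q with h | h | h
      · exact absurd huqp (hA h)
      · subst h; exact absurd huqp (lt_irrefl _)
      · exact h
    by_cases hpb : p = b
    · subst hpb
      left
      refine ⟨q, ⟨?_, hqp, huqp⟩, rfl, rfl⟩
      by_cases hqa : q = a
      · exact le_of_eq (hqa.symm)
      · have hq : Equiv.swap a p q = q :=
          Equiv.swap_apply_of_ne_of_ne hqa (ne_of_lt hqp)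
        rw [hq, Equiv.swap_apply_right] at hσ
        exact le_of_lt hσ
    · right
      have hqa : q = a := by
        by_contra hqa
        by_cases hpa : p = a
        · subst hpa
          have hq : Equiv.swap p b q = q :=
            Equiv.swap_apply_of_ne_of_ne (ne_of_lt hqp) (ne_of_lt (lt_trans hqp hab))
          rw [hq, Equiv.swap_apply_left] at hσ
          exact absurd (lt_trans (lt_trans hqp hab) hσ) (lt_irrefl _)
        · by_cases hqb : q = b
          · subst hqb
            rw [Equiv.swap_apply_right, Equiv.swap_apply_of_ne_of_ne hpa hpb] at hσ
            exact absurd (lt_trans (lt_trans hσ hab) hqp) (lt_irrefl _)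
          · rw [Equiv.swap_apply_of_ne_of_ne hpa hpb,
              Equiv.swap_apply_of_ne_of_ne hqa hqb] at hσ
            exact absurd hqp (not_lt.mpr (le_of_lt hσ))
      subst hqa
      refine ⟨p, ⟨hqp, ?_, huqp⟩, rfl, rfl⟩
      have hpa : p ≠ q := ne_of_gt hqp
      rw [Equiv.swap_apply_left, Equiv.swap_apply_of_ne_of_ne hpa hpb] at hσ
      exact hσ
  · rintro (⟨x, ⟨hax, hxb, hux⟩, hp, hq⟩ | ⟨x, ⟨hax, hxb, hux⟩, hp, hq⟩) <;> subst hp <;> subst hq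
    · refine ⟨⟨?_, hux⟩, fun h _ => absurd (lt_trans h hxb) (lt_irrefl _)⟩
      rw [Equiv.swap_apply_right]
      rcases eq_or_lt_of_le hax with h | h
      · subst h; rw [Equiv.swap_apply_left]; exact hab
      · rw [Equiv.swap_apply_of_ne_of_ne (ne_of_gt h) (ne_of_lt hxb)]; exact h
    · refine ⟨⟨?_, hux⟩, fun h _ => absurd (lt_trans h hax) (lt_irrefl _)⟩
      rw [Equiv.swap_apply_left, Equiv.swap_apply_of_ne_of_ne (ne_of_gt hax) (ne_of_lt hxb)]
      exact hxb


lemma star_eq (hab : a < b) :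
    invCount (u * Equiv.swap a b)
      + (univ.filter fun q : Fin n => a < q ∧ q ≤ b ∧ u q < u a).card
      + (univ.filter fun c : Fin n => a < c ∧ c < b ∧ u b < u c).card
    = invCount u
      + (univ.filter fun s : Fin n => a ≤ s ∧ s < b ∧ u s < u b).card
      + (univ.filter fun c : Fin n => a < c ∧ c < b ∧ u a < u c).card := by
  have hB : invCount (u * Equiv.swap a b) = (Binv u a b).card := invCount_mul_swap u
  have hA : invCount u = (Ainv u).card := rfl
  have h1 : (Ainv u \ Binv u a b).card + (Binv u a b).card = (Ainv u ∪ Binv u a b).card :=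
    Finset.card_sdiff_add_card _ _
  have h2 : (Binv u a b \ Ainv u).card + (Ainv u).card = (Ainv u ∪ Binv u a b).card := by
    rw [Finset.card_sdiff_add_card, Finset.union_comm]
  have hABcard : (Ainv u \ Binv u a b).card
      = (univ.filter fun q : Fin n => a < q ∧ q ≤ b ∧ u q < u a).card
        + (univ.filter fun c : Fin n => a < c ∧ c < b ∧ u b < u c).card := by
    rw [sdiff_AB u hab, Finset.card_union_of_disjoint, Finset.card_image_of_injective _
      (fun x y h => by simpa using h), Finset.card_image_of_injective _
      (fun x y h => by simpa using h)]
    rw [Finset.disjoint_left]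
    rintro ⟨p1, p2⟩ h1' h2'
    simp only [mem_image, mem_filter, mem_univ, true_and, Prod.mk.injEq] at h1' h2'
    obtain ⟨q, hq, rfl, rfl⟩ := h1'
    obtain ⟨c, hc, rfl, -⟩ := h2'
    exact absurd hc.1 (lt_irrefl _)
  have hBAcard : (Binv u a b \ Ainv u).card
      = (univ.filter fun s : Fin n => a ≤ s ∧ s < b ∧ u s < u b).card
        + (univ.filter fun c : Fin n => a < c ∧ c < b ∧ u a < u c).card := by
    rw [sdiff_BA u hab, Finset.card_union_of_disjoint, Finset.card_image_of_injective _
      (fun x y h => by simpa using h), Finset.card_image_of_injective _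
      (fun x y h => by simpa using h)]
    rw [Finset.disjoint_left]
    rintro ⟨p1, p2⟩ h1' h2'
    simp only [mem_image, mem_filter, mem_univ, true_and, Prod.mk.injEq] at h1' h2'
    obtain ⟨q, hq, rfl, rfl⟩ := h1'
    obtain ⟨c, hc, rfl, -⟩ := h2'
    exact absurd hc.2.1 (lt_irrefl _)
  omega

end Star

lemma cover_facts {n : ℕ} {u w : Equiv.Perm (Fin n)} {a b : Fin n} (hab : a < b)
    (huw : u = w * Equiv.swap a b) (hinv : invCount w = invCount u + 1) :
    u a < u b ∧ ∀ c : Fin n, a < c → c < b → ¬(u a < u c ∧ u c < u b) := by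
  have hw : w = u * Equiv.swap a b := by
    rw [huw, mul_assoc, Equiv.swap_mul_self, mul_one]
  have hstar := star_eq u hab
  rw [← hw, hinv] at hstar
  -- notation
  set N1 := (Finset.univ.filter fun q : Fin n => a < q ∧ q ≤ b ∧ u q < u a).card with hN1
  set N2 := (Finset.univ.filter fun c : Fin n => a < c ∧ c < b ∧ u b < u c).card with hN2
  set N3 := (Finset.univ.filter fun s : Fin n => a ≤ s ∧ s < b ∧ u s < u b).card with hN3
  set N4 := (Finset.univ.filter fun c : Fin n => a < c ∧ c < b ∧ u a < u c).card with hN4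
  set M1 := (Finset.univ.filter fun c : Fin n => a < c ∧ c < b ∧ u c < u a).card with hM1
  set M3 := (Finset.univ.filter fun c : Fin n => a < c ∧ c < b ∧ u c < u b).card with hM3
  set Mm := (Finset.univ.filter fun c : Fin n => a < c ∧ c < b ∧ u a < u c ∧ u c < u b).card
    with hMm
  have hune : u a ≠ u b := fun h => ne_of_lt hab (u.injective h)
  -- rule out u b < u a
  have hub : u a < u b := by
    rcases lt_or_gt_of_ne hune with h | h
    · exact h
    · exfalso
      have hle1 : N3 ≤ N1 := by
        apply Finset.card_le_card
        intro x hx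
        simp only [Finset.mem_filter, Finset.mem_univ, true_and] at hx ⊢
        rcases eq_or_lt_of_le hx.1 with rfl | hax
        · exact absurd (lt_trans hx.2.2 h) (lt_irrefl _)
        · exact ⟨hax, le_of_lt hx.2.1, lt_trans hx.2.2 h⟩
      have hle2 : N4 ≤ N2 := by
        apply Finset.card_le_card
        intro x hx
        simp only [Finset.mem_filter, Finset.mem_univ, true_and] at hx ⊢
        exact ⟨hx.1, hx.2.1, lt_trans h hx.2.2⟩
      omega
  -- split N1 (q = b term vanishes) and N3 (s = a term contributes 1)
  have hsN1 : N1 = M1 := by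
    rw [hN1, hM1]
    congr 1
    apply Finset.filter_congr
    intro q _
    constructor
    · rintro ⟨h1, h2, h3⟩
      rcases lt_or_eq_of_le h2 with h | rfl
      · exact ⟨h1, h, h3⟩
      · exact absurd (lt_trans hub h3) (lt_irrefl _)
    · rintro ⟨h1, h2, h3⟩; exact ⟨h1, le_of_lt h2, h3⟩
  have hsN3 : N3 = M3 + 1 := by
    rw [hN3, hM3]
    have : (Finset.univ.filter fun s : Fin n => a ≤ s ∧ s < b ∧ u s < u b)
        = (Finset.univ.filter fun c : Fin n => a < c ∧ c < b ∧ u c < u b) ∪ {a} := by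
      ext s
      simp only [Finset.mem_filter, Finset.mem_univ, true_and, Finset.mem_union,
        Finset.mem_singleton]
      constructor
      · rintro ⟨h1, h2, h3⟩
        rcases eq_or_lt_of_le h1 with rfl | h
        · exact Or.inr rfl
        · exact Or.inl ⟨h, h2, h3⟩
      · rintro (⟨h1, h2, h3⟩ | rfl)
        · exact ⟨le_of_lt h1, h2, h3⟩
        · exact ⟨le_refl _, hab, hub⟩
    rw [this, Finset.card_union_of_disjoint]
    · simp
    · simp only [Finset.disjoint_singleton_right, Finset.mem_filter]
      rintro ⟨-, h, -⟩
      exact absurd h (lt_irrefl _)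
  -- partitions
  have hpart1 : M3 = M1 + Mm := by
    rw [hM3, hM1, hMm, ← Finset.card_union_of_disjoint]
    · congr 1
      ext c
      simp only [Finset.mem_filter, Finset.mem_univ, true_and, Finset.mem_union]
      constructor
      · rintro ⟨h1, h2, h3⟩
        rcases lt_trichotomy (u c) (u a) with h | h | h
        · exact Or.inl ⟨h1, h2, h⟩
        · exact absurd (u.injective h) (ne_of_gt h1)
        · exact Or.inr ⟨h1, h2, h, h3⟩
      · rintro (⟨h1, h2, h3⟩ | ⟨h1, h2, h3, h4⟩)
        · exact ⟨h1, h2, lt_trans h3 hub⟩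
        · exact ⟨h1, h2, h4⟩
    · rw [Finset.disjoint_left]
      intro c hc1 hc2
      simp only [Finset.mem_filter] at hc1 hc2
      exact absurd (lt_trans hc1.2.2.2 hc2.2.2.2.1) (lt_irrefl _)
  have hpart2 : N4 = Mm + N2 := by
    rw [hN4, hN2, hMm, ← Finset.card_union_of_disjoint]
    · congr 1
      ext c
      simp only [Finset.mem_filter, Finset.mem_univ, true_and, Finset.mem_union]
      constructor
      · rintro ⟨h1, h2, h3⟩
        rcases lt_trichotomy (u c) (u b) with h | h | h
        · exact Or.inl ⟨h1, h2, h3, h⟩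
        · exact absurd (u.injective h) (ne_of_lt h2)
        · exact Or.inr ⟨h1, h2, h⟩
      · rintro (⟨h1, h2, h3, h4⟩ | ⟨h1, h2, h3⟩)
        · exact ⟨h1, h2, h3⟩
        · exact ⟨h1, h2, lt_trans hub h3⟩
    · rw [Finset.disjoint_left]
      intro c hc1 hc2
      simp only [Finset.mem_filter] at hc1 hc2
      exact absurd (lt_trans hc1.2.2.2.2 hc2.2.2.2) (lt_irrefl _)
  have hMm0 : Mm = 0 := by omega
  refine ⟨hub, fun c hac hcb hbad => ?_⟩
  have : c ∈ Finset.univ.filter fun c : Fin n => a < c ∧ c < b ∧ u a < u c ∧ u c < u b := by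
    simp only [Finset.mem_filter, Finset.mem_univ, true_and]
    exact ⟨hac, hcb, hbad.1, hbad.2⟩
  rw [Finset.card_eq_zero.mp hMm0] at this
  exact absurd this (Finset.notMem_empty _)

def Dom {n : ℕ} (S : Set ℕ) (v : Equiv.Perm (Fin n)) : Prop :=
  ∀ p q : Fin n, p < q → ((p : ℕ) + 1 ∉ S) → v q < v p

lemma chain_dom {n κ : ℕ} {S : Set ℕ} (hκS : κ ∉ S) {e : ℕ}
    (v : Fin (e + 1) → Equiv.Perm (Fin n)) (A B : Fin e → Fin n)
    (hch : IsIncKChain n κ v A B) (hw : Dom S (v (Fin.last e))) :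
    Dom (S ∪ {κ}) (v 0) := by
  obtain ⟨hcov, hinc⟩ := hch
  suffices H : ∀ m : Fin (e + 1), Dom (S ∪ {κ}) (v m) ∧
      (∀ p : Fin n, (p : ℕ) < κ → ((p : ℕ) + 1 ∉ S) → ∀ m' : Fin e,
        (m' : ℕ) < (m : ℕ) → v m'.castSucc (A m') < v m p) by
    exact (H 0).1
  intro m
  induction m using Fin.reverseInduction with
  | last =>
    constructor
    · intro p q hpq hp
      exact hw p q hpq (fun hmem => hp (Or.inl hmem))
    · intro p hpκ hpS m' _
      have hef : 0 < e := lt_of_le_of_lt (Nat.zero_le _) m'.isLt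
      set elast : Fin e := ⟨e - 1, by omega⟩ with helast
      have hsucclast : elast.succ = Fin.last e := by
        apply Fin.ext
        simp [helast]
        omega
      have hsl : v elast.castSucc (A elast) = v (Fin.last e) (B elast) := by
        rw [← hsucclast, (hcov elast).2.2.1]
        simp [Equiv.Perm.mul_apply, Equiv.swap_apply_left]
      have hpb : p < B elast := by
        rw [Fin.lt_def]
        exact lt_of_lt_of_le hpκ (hcov elast).2.1
      have hlt : v elast.castSucc (A elast) < v (Fin.last e) p := by
        rw [hsl]
        exact hw p (B elast) hpb hpS
      have hm'e : (m' : ℕ) < e := m'.isLt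
      rcases eq_or_lt_of_le (show (m' : ℕ) ≤ e - 1 by omega) with heq | hlt'
      · have : m' = elast := Fin.ext heq
        rw [this]; exact hlt
      · exact lt_trans (hinc m' elast (Fin.lt_def.mpr hlt')) hlt
  | cast i ih =>
    obtain ⟨haκ, hκb, heq, hic⟩ := hcov i
    have hAB : A i < B i := Fin.lt_def.mpr (lt_of_lt_of_le haκ hκb)
    obtain ⟨hsL, hNI⟩ := cover_facts hAB heq hic
    set u := v i.castSucc with hu
    set wq := v i.succ with hwq
    have happ : ∀ x, u x = wq (Equiv.swap (A i) (B i) x) := by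
      intro x; rw [heq]; rfl
    have hua : u (A i) = wq (B i) := by rw [happ, Equiv.swap_apply_left]
    have hub : u (B i) = wq (A i) := by rw [happ, Equiv.swap_apply_right]
    have hux : ∀ x, x ≠ A i → x ≠ B i → u x = wq x := by
      intro x h1 h2; rw [happ, Equiv.swap_apply_of_ne_of_ne h1 h2]
    obtain ⟨ihD, ihC⟩ := ih
    have hBst : ∀ p : Fin n, (p : ℕ) < κ → ((p : ℕ) + 1 ∉ S) → u (A i) < wq p := by
      intro p h1 h2
      exact ihC p h1 h2 i (by simp)
    -- (i) the left position of the cover is an allowed position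
    have haS : ((A i : ℕ) + 1) ∈ S ∪ {κ} := by
      by_contra hnot
      have hnotS : ((A i : ℕ) + 1) ∉ S := fun h => hnot (Or.inl h)
      have hnotκ : ((A i : ℕ) + 1) ≠ κ := fun h => hnot (Or.inr h)
      have hBlt : (B i : ℕ) < n := (B i).isLt
      set q : Fin n := ⟨κ - 1, by omega⟩ with hqdef
      have hqκ : (q : ℕ) < κ := by simp [hqdef]; omega
      have hqS : ((q : ℕ) + 1) ∉ S := by
        have : (q : ℕ) + 1 = κ := by simp [hqdef]; omega
        rw [this]; exact hκS
      have hAq : A i < q := by rw [Fin.lt_def]; simp [hqdef]; omega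
      have hqB : q < B i := by rw [Fin.lt_def]; simp [hqdef]; omega
      have hqeq : u q = wq q := hux q (ne_of_gt hAq) (ne_of_lt hqB)
      have h1 : u (A i) < u q := by rw [hqeq]; exact hBst q hqκ hqS
      have h2 : u (B i) < u q := by
        rcases lt_trichotomy (u q) (u (B i)) with h | h | h
        · exact absurd ⟨h1, h⟩ (hNI q hAq hqB)
        · exact absurd (u.injective h) (ne_of_lt hqB)
        · exact h
      have h3 : wq q < wq (A i) := ihD (A i) q hAq hnot
      rw [← hqeq, ← hub] at h3
      exact absurd (lt_trans h2 h3) (lt_irrefl _)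
    constructor
    · -- Dom (S ∪ {κ}) u
      intro p q hpq hpnot
      have hpA : p ≠ A i := fun h => hpnot (h ▸ haS)
      by_cases hpB : p = B i
      · subst hpB
        have hqA : q ≠ A i := ne_of_gt (lt_trans hAB hpq)
        have hqB : q ≠ B i := ne_of_gt hpq
        rw [hux q hqA hqB]
        calc wq q < wq (B i) := ihD (B i) q hpq hpnot
        _ = u (A i) := hua.symm
        _ < u (B i) := hsL
      · rw [hux p hpA hpB]
        by_cases hqA : q = A i
        · subst hqA
          have hpq' : p < A i := hpq
          calc u (A i) < u (B i) := hsL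
          _ = wq (A i) := hub
          _ < wq p := ihD p (A i) hpq' hpnot
        · by_cases hqB : q = B i
          · subst hqB
            rw [hub]
            rcases lt_trichotomy (p : ℕ) ((A i : ℕ)) with h | h | h
            · exact ihD p (A i) (Fin.lt_def.mpr h) hpnot
            · exact absurd (Fin.ext h) hpA
            · -- A i < p < B i
              have hAp : A i < p := Fin.lt_def.mpr h
              have hups : u (A i) < u p := by
                rw [hux p hpA hpB, hua]
                exact ihD p (B i) hpq hpnot
              have : u (B i) < u p := by
                rcases lt_trichotomy (u p) (u (B i)) with h' | h' | h'
                · exact absurd ⟨hups, h'⟩ (hNI p hAp hpq)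
                · exact absurd (u.injective h') hpB
                · exact h'
              rw [hux p hpA hpB, hub] at this
              exact this
          · rw [hux q hqA hqB]
            exact ihD p q hpq hpnot
    · -- past smaller values are below current left-of-κ non-S values
      intro p hpκ hpS m' hm'
      have hm'i : (m' : ℕ) < (i : ℕ) := by simpa using hm'
      by_cases hpA : p = A i
      · subst hpA
        exact hinc m' i (Fin.lt_def.mpr hm'i)
      · have hpB : p ≠ B i := by
          intro h
          rw [h] at hpκ
          omega
        rw [hux p hpA hpB]
        exact ihC p hpκ hpS m' (by simp; omega)

end Aux

theorem stmt7 (n d k : ℕ) (V : Fin (d + 1) → Equiv.Perm (Fin n)) (K : Fin d → ℕ)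
    (hK : ∀ i, 1 ≤ K i ∧ K i ≤ n - 1) (hinj : Function.Injective K)
    (hend : V (Fin.last d) = Fin.revPerm)
    (hsteps : ∀ i : Fin d,
      ∃ e, ExIncKChainLen n (K i) e (V i.castSucc) (V i.succ))
    (hmin : ∀ i, k ≤ K i) (hmem : ∃ i, K i = k) :
    ∀ p : Fin n, (p : ℕ) + 1 < k → V 0 p = Fin.rev p := by
  have houter : ∀ i : Fin (d + 1),
      Dom {x : ℕ | ∃ j : Fin d, (i : ℕ) ≤ (j : ℕ) ∧ K j = x} (V i) := by
    intro i
    induction i using Fin.reverseInduction with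
    | last =>
      intro p q hpq _
      rw [hend]
      simp only [Fin.revPerm_apply]
      exact Fin.rev_lt_rev.mpr hpq
    | cast i ih =>
      obtain ⟨e, v, Aa, Bb, hch, hv0, hvl⟩ := hsteps i
      have hκS : K i ∉ {x : ℕ | ∃ j : Fin d, ((i.succ : Fin (d+1)) : ℕ) ≤ (j : ℕ) ∧ K j = x} := by
        rintro ⟨j, hij, hKj⟩
        have hj : j = i := hinj hKj
        subst hj
        simp at hij
      have hDom0 : Dom ({x : ℕ | ∃ j : Fin d, ((i.succ : Fin (d+1)) : ℕ) ≤ (j : ℕ) ∧ K j = x}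
          ∪ {K i}) (v 0) := by
        apply chain_dom hκS v Aa Bb hch
        rw [hvl]
        exact ih
      rw [← hv0] at *
      intro p q hpq hpnot
      apply hDom0 p q hpq
      rintro (⟨j, hij, hKj⟩ | hx)
      · exact hpnot ⟨j, by simp at hij ⊢; omega, hKj⟩
      · exact hpnot ⟨i, by simp, hx.symm⟩
  intro p hp
  have h0 := houter 0
  have hnot : ∀ q : Fin n, (q : ℕ) ≤ (p : ℕ) →
      (q : ℕ) + 1 ∉ {x : ℕ | ∃ j : Fin d, ((0 : Fin (d+1)) : ℕ) ≤ (j : ℕ) ∧ K j = x} := by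
    rintro q hq ⟨j, -, hKj⟩
    have := hmin j
    omega
  have hdom1 : ∀ q, p < q → V 0 q < V 0 p := fun q hq => h0 p q hq (hnot p le_rfl)
  have hdom2 : ∀ q, q < p → V 0 p < V 0 q := fun q hq =>
    h0 q p hq (hnot q (le_of_lt (Fin.lt_def.mp hq)))
  have hc1 : (Finset.Ioi p).card ≤ (Finset.Iio (V 0 p)).card := by
    apply Finset.card_le_card_of_injOn (fun q => V 0 q)
    · intro q hq
      simp only [Finset.coe_Ioi, Finset.coe_Iio, Set.mem_Ioi, Set.mem_Iio, Finset.mem_coe, Finset.mem_Ioi, Finset.mem_Iio] at hq ⊢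
      exact hdom1 q hq
    · exact fun x _ y _ h => (V 0).injective h
  have hc2 : (Finset.Iio p).card ≤ (Finset.Ioi (V 0 p)).card := by
    apply Finset.card_le_card_of_injOn (fun q => V 0 q)
    · intro q hq
      simp only [Finset.coe_Ioi, Finset.coe_Iio, Set.mem_Ioi, Set.mem_Iio, Finset.mem_coe, Finset.mem_Ioi, Finset.mem_Iio] at hq ⊢
      exact hdom2 q hq
    · exact fun x _ y _ h => (V 0).injective h
  rw [Fin.card_Ioi, Fin.card_Iio] at hc1
  rw [Fin.card_Iio, Fin.card_Ioi] at hc2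
  have h1 : (p : ℕ) < n := p.isLt
  have h2 : ((V 0 p : Fin n) : ℕ) < n := (V 0 p).isLt
  apply Fin.ext
  rw [Fin.val_rev]
  omega
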